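/- Let Ξ be a finite set with a probability vector (p_j)_{j∈Ξ}, p_j > 0, and nonnegative numbers p_{jk} with Σ_k p_{jk} = 1 for each j. Let G be a group acting on a probability space (X,μ) by invertible measure-preserving transformations, with Koopman operators T_g on L²(X,μ). Let ι : Ξ → Ξ be an involution and γ, ω : Ξ → G maps such that: p_{ι(j)} = p_j and p_{ι(j)ι(k)} = p_k p_{kj} / p_j for all j, k ∈ Ξ; ω(ι(k)) = ω(k)^{−1} for all k ∈ Ξ; and γ(k) = ω(j)^{−1} γ(ι(j))^{−1} ω(k) whenever p_{kj} > 0. Define operators P and U on L²(Ξ × X, p × μ) by (Pφ)_i = Σ_j p_{ij} T_{γ(i)}^{−1} φ_j and (Uφ)_j = T_{ω(j)}^{−1} φ_{ι(j)}. Then U = U^{−1} = U* and P* = U P U, where * denotes the Hilbert-space adjoint on L²(Ξ × X, p × μ). -/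

import Mathlib

open MeasureTheory Filter

noncomputable section

section helpers

variable {X : Type*} [MeasurableSpace X] {G : Type*} [Group G]
  {μ : Measure X}
  {S : G → X → X} (hS : ∀ g, MeasurePreserving (S g) μ μ)
  (hS1 : S 1 = id) (hSm : ∀ g g', S (g * g') = S g ∘ S g')
  {T : G → Lp ℝ 2 μ →L[ℝ] Lp ℝ 2 μ}
  (hT : ∀ g (f : Lp ℝ 2 μ), (T g f : X → ℝ) =ᵐ[μ] fun x => f (S g⁻¹ x))

include hS hSm hT in
lemma Tmul (g g' : G) (f : Lp ℝ 2 μ) : T g (T g' f) = T (g * g') f := by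
  apply Lp.ext
  have h2 : (fun x => (T g' f : X → ℝ) (S g⁻¹ x)) =ᵐ[μ] fun x => f (S g'⁻¹ (S g⁻¹ x)) :=
    (hS g⁻¹).quasiMeasurePreserving.ae_eq_comp (hT g' f)
  refine ((hT g (T g' f)).trans h2).trans ?_
  have : (fun x => (f : X → ℝ) (S g'⁻¹ (S g⁻¹ x))) = fun x => f (S (g*g')⁻¹ x) := by
    funext x; rw [mul_inv_rev, hSm]; rfl
  rw [this]
  exact (hT (g*g') f).symm

include hS1 hT in
lemma Tone (f : Lp ℝ 2 μ) : T 1 f = f := by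
  apply Lp.ext
  refine (hT 1 f).trans ?_
  simp [hS1]

include hS hS1 hSm in
/-- `S g` as a measurable equivalence. -/
def Sequiv (g : G) : X ≃ᵐ X where
  toFun := S g
  invFun := S g⁻¹
  left_inv x := by
    have : S g⁻¹ ∘ S g = id := by rw [← hSm, inv_mul_cancel, hS1]
    exact congrFun this x
  right_inv x := by
    have : S g ∘ S g⁻¹ = id := by rw [← hSm, mul_inv_cancel, hS1]
    exact congrFun this x
  measurable_toFun := (hS g).measurable
  measurable_invFun := (hS g⁻¹).measurable

include hS hS1 hSm hT in
lemma Tinner (g : G) (f h : Lp ℝ 2 μ) :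
    (inner ℝ (T g f) (T g h) : ℝ) = inner ℝ f h := by
  rw [L2.inner_def, L2.inner_def]
  have h1 : ∀ᵐ x ∂μ, (inner ℝ ((T g f : X → ℝ) x) ((T g h : X → ℝ) x) : ℝ)
      = inner ℝ ((f : X → ℝ) (S g⁻¹ x)) ((h : X → ℝ) (S g⁻¹ x)) := by
    filter_upwards [hT g f, hT g h] with x e1 e2
    rw [e1, e2]
  rw [integral_congr_ae h1]
  exact (hS g⁻¹).integral_comp' (f := Sequiv hS hS1 hSm g⁻¹)
    (g := fun y => (inner ℝ ((f : X → ℝ) y) ((h : X → ℝ) y) : ℝ))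

include hS hS1 hSm hT in
lemma Tadj (g : G) (f h : Lp ℝ 2 μ) :
    (inner ℝ (T g f) h : ℝ) = inner ℝ f (T g⁻¹ h) := by
  conv_lhs => rw [show h = T g (T g⁻¹ h) by rw [Tmul hS hSm hT, mul_inv_cancel, Tone hS1 hT]]
  exact Tinner hS hS1 hSm hT g f (T g⁻¹ h)

end helpers

/-- The Markov operator `(Pφ)_i = Σ_j p_{ij} T_{γ(i)}⁻¹ φ_j` on tuples `(φ_j)_{j∈Ξ}` of
`L²(X,μ)`-functions (identified with functions on `Ξ × X`). -/
def Pop {Ξ : Type*} [Fintype Ξ] {X : Type*} [MeasurableSpace X] {G : Type*} [Group G]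
    (μ : Measure X) (p' : Ξ → Ξ → ℝ) (T : G → Lp ℝ 2 μ →L[ℝ] Lp ℝ 2 μ) (γ : Ξ → G)
    (φ : Ξ → Lp ℝ 2 μ) : Ξ → Lp ℝ 2 μ :=
  fun i => ∑ j, p' i j • T (γ i)⁻¹ (φ j)

/-- The operator `(Uφ)_j = T_{ω(j)}⁻¹ φ_{ι(j)}`. -/
def Uop {Ξ : Type*} {X : Type*} [MeasurableSpace X] {G : Type*} [Group G]
    (μ : Measure X) (T : G → Lp ℝ 2 μ →L[ℝ] Lp ℝ 2 μ) (ι : Ξ → Ξ) (ω : Ξ → G)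
    (φ : Ξ → Lp ℝ 2 μ) : Ξ → Lp ℝ 2 μ :=
  fun j => T (ω j)⁻¹ (φ (ι j))

/-- The inner product `⟨φ,ψ⟩ = Σ_j p_j ⟨φ_j, ψ_j⟩_{L²(X,μ)}` of `L²(Ξ × X, p × μ)`. -/
def wip {Ξ : Type*} [Fintype Ξ] {X : Type*} [MeasurableSpace X]
    (μ : Measure X) (p : Ξ → ℝ) (φ ψ : Ξ → Lp ℝ 2 μ) : ℝ :=
  ∑ j, p j * (inner ℝ (φ j) (ψ j) : ℝ)

/-- For a reversible Parry-type Markov measure and maps `γ, ω` compatible with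
the time-reversing involution `ι`, the operators `P` and `U` on `L²(Ξ × X, p × μ)` satisfy
`U = U⁻¹ = U*` and `P* = U P U`. -/
theorem statement9
    {Ξ : Type*} [Fintype Ξ] {X : Type*} [MeasurableSpace X] {G : Type*} [Group G]
    (μ : Measure X) [IsProbabilityMeasure μ]
    -- the probability vector and the transition probabilities
    (p : Ξ → ℝ) (hp : ∀ j, 0 < p j) (hpsum : ∑ j, p j = 1)
    (p' : Ξ → Ξ → ℝ) (hp'nn : ∀ j k, 0 ≤ p' j k) (hrow : ∀ j, ∑ k, p' j k = 1)
    -- the measure-preserving action of G on (X,μ) by invertible transformations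
    (S : G → X → X) (hS : ∀ g, MeasurePreserving (S g) μ μ)
    (hS1 : S 1 = id) (hSm : ∀ g g', S (g * g') = S g ∘ S g')
    -- the Koopman operators T_g f = f ∘ S g⁻¹ on L²(X,μ)
    (T : G → Lp ℝ 2 μ →L[ℝ] Lp ℝ 2 μ)
    (hT : ∀ g (f : Lp ℝ 2 μ), (T g f : X → ℝ) =ᵐ[μ] fun x => f (S g⁻¹ x))
    -- the involution and the maps γ, ω
    (ι : Ξ → Ξ) (hι : ∀ j, ι (ι j) = j)
    (γ ω : Ξ → G)
    (hpι : ∀ j, p (ι j) = p j)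
    (hp'ι : ∀ j k, p' (ι j) (ι k) = p k * p' k j / p j)
    (hω : ∀ k, ω (ι k) = (ω k)⁻¹)
    (hγ : ∀ j k, 0 < p' k j → γ k = (ω j)⁻¹ * (γ (ι j))⁻¹ * ω k) :
    (∀ φ : Ξ → Lp ℝ 2 μ, Uop μ T ι ω (Uop μ T ι ω φ) = φ) ∧
    (∀ φ ψ : Ξ → Lp ℝ 2 μ, wip μ p (Uop μ T ι ω φ) ψ = wip μ p φ (Uop μ T ι ω ψ)) ∧
    (∀ φ ψ : Ξ → Lp ℝ 2 μ,
      wip μ p (Pop μ p' T γ φ) ψ =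
        wip μ p φ (Uop μ T ι ω (Pop μ p' T γ (Uop μ T ι ω ψ)))) := by
  have hinv : Function.Involutive ι := hι
  let e : Equiv.Perm Ξ := hinv.toPerm
  refine ⟨?_, ?_, ?_⟩
  · intro φ
    funext j
    simp only [Uop, hι, hω, inv_inv]
    rw [Tmul hS hSm hT, inv_mul_cancel, Tone hS1 hT]
  · intro φ ψ
    unfold wip
    rw [← Equiv.sum_comp e (fun j => p j * (inner ℝ (Uop μ T ι ω φ j) (ψ j) : ℝ))]
    refine Finset.sum_congr rfl fun j _ => ?_
    simp only [Uop, e, Function.Involutive.coe_toPerm]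
    rw [hpι, hι, hω, inv_inv, Tadj hS hS1 hSm hT]
  · intro φ ψ
    have key : ∀ j k : Ξ, p k * p' k j * (inner ℝ (φ j) (T (γ k) (ψ k)) : ℝ)
        = p j * (p' (ι j) (ι k) * (inner ℝ (φ j) (T ((ω j)⁻¹ * ((γ (ι j))⁻¹ * ω k)) (ψ k)) : ℝ)) := by
      intro j k
      have hc : p j * p' (ι j) (ι k) = p k * p' k j := by
        rw [hp'ι, mul_comm, div_mul_cancel₀ _ (hp j).ne']
      rcases eq_or_lt_of_le (hp'nn k j) with h | h
      · rw [hp'ι, ← h]; ring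
      · rw [← mul_assoc, hc,
          show (ω j)⁻¹ * ((γ (ι j))⁻¹ * ω k) = γ k by rw [← mul_assoc]; exact (hγ j k h).symm]
    calc wip μ p (Pop μ p' T γ φ) ψ
        = ∑ i, ∑ j, p i * p' i j * (inner ℝ (φ j) (T (γ i) (ψ i)) : ℝ) := by
          unfold wip Pop
          simp only [sum_inner, real_inner_smul_left, Finset.mul_sum]
          refine Finset.sum_congr rfl fun i _ => Finset.sum_congr rfl fun j _ => ?_
          rw [Tadj hS hS1 hSm hT, inv_inv, mul_assoc]
      _ = ∑ j, ∑ i, p i * p' i j * (inner ℝ (φ j) (T (γ i) (ψ i)) : ℝ) := Finset.sum_comm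
      _ = ∑ j, ∑ k, p j * (p' (ι j) (ι k)
            * (inner ℝ (φ j) (T ((ω j)⁻¹ * ((γ (ι j))⁻¹ * ω k)) (ψ k)) : ℝ)) :=
          Finset.sum_congr rfl fun j _ => Finset.sum_congr rfl fun k _ => key j k
      _ = ∑ j, ∑ k, p j * (p' (ι j) k
            * (inner ℝ (φ j) (T ((ω j)⁻¹ * ((γ (ι j))⁻¹ * (ω k)⁻¹)) (ψ (ι k))) : ℝ)) := by
          refine Finset.sum_congr rfl fun j _ => ?_
          rw [← Equiv.sum_comp e (fun k => p j * (p' (ι j) k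
            * (inner ℝ (φ j) (T ((ω j)⁻¹ * ((γ (ι j))⁻¹ * (ω k)⁻¹)) (ψ (ι k))) : ℝ)))]
          refine Finset.sum_congr rfl fun k _ => ?_
          simp only [e, Function.Involutive.coe_toPerm]
          rw [hι, hω, inv_inv]
      _ = wip μ p φ (Uop μ T ι ω (Pop μ p' T γ (Uop μ T ι ω ψ))) := by
          unfold wip Uop Pop
          simp only [map_sum, _root_.map_smul, inner_sum, real_inner_smul_right, Finset.mul_sum]
          refine Finset.sum_congr rfl fun j _ => Finset.sum_congr rfl fun k _ => ?_
          rw [← Tmul hS hSm hT (ω j)⁻¹ ((γ (ι j))⁻¹ * (ω k)⁻¹),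
            ← Tmul hS hSm hT (γ (ι j))⁻¹ (ω k)⁻¹]
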